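/- Let T = (V,E,w) be a weighted tree with weights in (0,1) and let C be a clustering of T (a partition of V into connected subtrees). Removing a single edge e of T splits T into two subtrees T_1, T_2; this induces clusterings A of T_1 and B of T_2 (each cluster of C intersected with the vertex set of T_i, the cluster containing an endpoint of e being split if e is internal to a cluster). Then Φ_{T_1}(A) ≤ Φ_T(C) and Φ_{T_2}(B) ≤ Φ_T(C), where Φ denotes the min-max cluster quality evaluated within the respective (sub)tree. -/

import Mathlib

open scoped Classical
noncomputable section

namespace Bal

variable {V : Type*}

/-- Total weight of the edges of a graph. -/
def totalWeight {α : Type*} [Fintype α] (H : SimpleGraph α) (w : Sym2 α → ℝ) : ℝ :=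
  ∑ e : Sym2 α, if e ∈ H.edgeSet then w e else 0

/-- `T` is a maximum spanning tree of `G` w.r.t. the weight `w`. -/
def IsMaxSpanTree {α : Type*} [Fintype α] (G T : SimpleGraph α) (w : Sym2 α → ℝ) : Prop :=
  T ≤ G ∧ T.IsTree ∧
    ∀ T' : SimpleGraph α, T' ≤ G → T'.IsTree → totalWeight T' w ≤ totalWeight T w

/-- Weight function on the induced subgraph on `C`. -/
def subWeight (w : Sym2 V → ℝ) (C : Set V) : Sym2 C → ℝ :=
  fun e => w (e.map Subtype.val)

/-- Edges of `G` with exactly one endpoint in `C`. -/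
def outEdges (G : SimpleGraph V) (C : Set V) : Set (Sym2 V) :=
  {e | e ∈ G.edgeSet ∧ ∃ a b, e = s(a, b) ∧ a ∈ C ∧ b ∉ C}

/-- Edges of `G` with both endpoints in `C`. -/
def inEdges (G : SimpleGraph V) (C : Set V) : Set (Sym2 V) :=
  {e | e ∈ G.edgeSet ∧ ∀ x ∈ e, x ∈ C}

/-- `max(Out(C))`, with the convention `sSup ∅ = 0`. -/
def maxOut (G : SimpleGraph V) (w : Sym2 V → ℝ) (C : Set V) : ℝ :=
  sSup (w '' outEdges G C)

/-- `min(E(C))`, with the convention that it is `1` for singletons. -/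
def minIn (G : SimpleGraph V) (w : Sym2 V → ℝ) (C : Set V) : ℝ :=
  if C.Subsingleton then 1 else sInf (w '' inEdges G C)

/-- `min(MST(C))` : minimum weight of an edge of a maximum spanning tree of `G[C]`,
with the convention that it is `1` for singletons. -/
def minMST [Fintype V] (G : SimpleGraph V) (w : Sym2 V → ℝ) (C : Set V) : ℝ :=
  if C.Subsingleton then 1
  else if h : ∃ T : SimpleGraph C, IsMaxSpanTree (G.induce C) T (subWeight w C) then
    sInf (subWeight w C '' h.choose.edgeSet)
  else 1

/-- Quality measure of a cluster in a graph: `max(Out(C)) / min(MST(C))`. -/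
def phi [Fintype V] (G : SimpleGraph V) (w : Sym2 V → ℝ) (C : Set V) : ℝ :=
  maxOut G w C / minMST G w C

/-- Quality measure of a cluster in a tree: `max(Out(C)) / min(E(C))`. -/
def phiT (G : SimpleGraph V) (w : Sym2 V → ℝ) (C : Set V) : ℝ :=
  maxOut G w C / minIn G w C

/-- `𝒞` is a partition of `U ⊆ V` into `G`-connected parts. -/
def IsPartitionOn (G : SimpleGraph V) (U : Set V) (𝒞 : Set (Set V)) : Prop :=
  (∀ C ∈ 𝒞, C.Nonempty ∧ C ⊆ U ∧ (G.induce C).Connected) ∧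
  (∀ C ∈ 𝒞, ∀ C' ∈ 𝒞, C ≠ C' → Disjoint C C') ∧ ⋃₀ 𝒞 = U

/-- A `k`-clustering of a graph `G` on vertex set `V`. -/
def IsClustering (G : SimpleGraph V) (𝒞 : Set (Set V)) (k : ℕ) : Prop :=
  IsPartitionOn G Set.univ 𝒞 ∧ 𝒞.ncard = k

/-- Evaluation of a clustering of a graph (min-max quality measure, MST-based). -/
def eval [Fintype V] (G : SimpleGraph V) (w : Sym2 V → ℝ) (𝒞 : Set (Set V)) : ℝ :=
  sSup (phi G w '' 𝒞)

/-- Evaluation of a clustering of a tree. -/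
def evalT (G : SimpleGraph V) (w : Sym2 V → ℝ) (𝒞 : Set (Set V)) : ℝ :=
  sSup (phiT G w '' 𝒞)

/-- `𝒞` is an optimal `k`-clustering of `G`. -/
def IsOptimal [Fintype V] (G : SimpleGraph V) (w : Sym2 V → ℝ) (k : ℕ) (𝒞 : Set (Set V)) : Prop :=
  IsClustering G 𝒞 k ∧ ∀ 𝒟, IsClustering G 𝒟 k → eval G w 𝒞 ≤ eval G w 𝒟

/-- All edge weights lie in the open interval `(0,1)`. -/
def weightsOK (G : SimpleGraph V) (w : Sym2 V → ℝ) : Prop :=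
  ∀ e ∈ G.edgeSet, 0 < w e ∧ w e < 1

/-- The set of connected components (as vertex sets) of a graph. -/
def components (G : SimpleGraph V) : Set (Set V) :=
  {C | ∃ x : V, C = {y | G.Reachable x y}}


section Aux
variable {V : Type*}

lemma exists_adj_of_connected (T : SimpleGraph V) {C : Set V}
    (h : (T.induce C).Connected) {a b : V} (ha : a ∈ C) (hb : b ∈ C) (hab : a ≠ b) :
    ∃ c ∈ C, T.Adj a c := by
  obtain ⟨p⟩ := h.preconnected ⟨a, ha⟩ ⟨b, hb⟩
  cases p with
  | nil => exact absurd rfl hab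
  | @cons _ x _ h' p' => exact ⟨x.val, x.2, h'⟩

lemma exists_inEdge (T T' : SimpleGraph V) (hT : T.IsAcyclic) (hle : T' ≤ T)
    {C : Set V} (hC : (T.induce C).Connected) {r : V}
    {a b : V} (ha : a ∈ C ∩ {x | T'.Reachable r x}) (hb : b ∈ C ∩ {x | T'.Reachable r x})
    (hab : a ≠ b) :
    (inEdges T' (C ∩ {x | T'.Reachable r x})).Nonempty := by
  obtain ⟨haC, haV⟩ := ha
  obtain ⟨hbC, hbV⟩ := hb
  obtain ⟨p'⟩ := hC.preconnected ⟨a, haC⟩ ⟨b, hbC⟩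
  let f : T.induce C →g T := (SimpleGraph.Embedding.induce C).toHom
  let p : T.Walk a b := p'.map f
  obtain ⟨q⟩ := (haV : T'.Reachable r a).symm.trans hbV
  let q' : T.Walk a b := q.transfer T
    (fun e he => SimpleGraph.edgeSet_mono hle (q.edges_subset_edgeSet he))
  have hpq : p.toPath = q'.toPath := hT.path_unique _ _
  have hsup : ∀ x ∈ (p.toPath : T.Walk a b).support, x ∈ C := by
    intro x hx
    have h1 := SimpleGraph.Walk.support_toPath_subset p hx
    rw [show p.support = (p'.map f).support from rfl, SimpleGraph.Walk.support_map] at h1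
    obtain ⟨y, _, rfl⟩ := List.mem_map.1 h1
    exact y.2
  have hedg : ∀ e ∈ (p.toPath : T.Walk a b).edges, e ∈ T'.edgeSet := by
    intro e he
    rw [hpq] at he
    have h1 := SimpleGraph.Walk.edges_toPath_subset q' he
    rw [SimpleGraph.Walk.edges_transfer] at h1
    exact q.edges_subset_edgeSet h1
  cases hw : (p.toPath : T.Walk a b) with
  | nil => exact absurd rfl hab
  | @cons _ c _ hadj rest =>
    have he : s(a, c) ∈ (p.toPath : T.Walk a b).edges := by
      rw [hw, SimpleGraph.Walk.edges_cons]; exact List.mem_cons_self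
    have hc : c ∈ (p.toPath : T.Walk a b).support := by
      rw [hw, SimpleGraph.Walk.support_cons]
      exact List.mem_cons_of_mem _ rest.start_mem_support
    have hT'adj : T'.Adj a c := (T'.mem_edgeSet).1 (hedg _ he)
    refine ⟨s(a, c), (hedg _ he), ?_⟩
    intro x hx
    rcases Sym2.mem_iff.1 hx with rfl | rfl
    · exact ⟨haC, haV⟩
    · exact ⟨hsup _ hc, haV.trans hT'adj.reachable⟩

lemma maxOut_nonneg {T : SimpleGraph V} {w : Sym2 V → ℝ} (hw : weightsOK T w)
    {G : SimpleGraph V} (hle : G ≤ T) (C : Set V) : 0 ≤ maxOut G w C := by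
  refine Real.sSup_nonneg ?_
  rintro x ⟨e, he, rfl⟩
  exact (hw e (SimpleGraph.edgeSet_mono hle he.1)).1.le

lemma minIn_pos [Fintype V] {T : SimpleGraph V} {w : Sym2 V → ℝ} (hw : weightsOK T w)
    {C : Set V} (hC : (T.induce C).Connected) : 0 < minIn T w C := by
  unfold minIn
  split_ifs with hs
  · norm_num
  · obtain ⟨a, ha, b, hb, hab⟩ := (Set.not_subsingleton_iff.1 hs)
    obtain ⟨c, hc, hadj⟩ := exists_adj_of_connected T hC ha hb hab
    have hne : (w '' inEdges T C).Nonempty :=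
      ⟨w s(a, c), ⟨s(a, c), ⟨hadj, by
        intro x hx; rcases Sym2.mem_iff.1 hx with rfl | rfl <;> assumption⟩, rfl⟩⟩
    obtain ⟨e, he, heq⟩ := hne.csInf_mem (Set.toFinite _)
    rw [← heq]
    exact (hw e he.1).1

lemma minIn_le_one [Fintype V] {T : SimpleGraph V} {w : Sym2 V → ℝ} (hw : weightsOK T w)
    (C : Set V) : minIn T w C ≤ 1 := by
  unfold minIn
  split_ifs with hs
  · exact le_rfl
  · by_cases hne : (w '' inEdges T C).Nonempty
    · obtain ⟨e, he, heq⟩ := hne.csInf_mem (Set.toFinite _)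
      rw [← heq]
      exact (hw e he.1).2.le
    · rw [Set.not_nonempty_iff_eq_empty.1 hne, Real.sInf_empty]; norm_num

lemma phiT_mono [Fintype V] (T T' : SimpleGraph V) (w : Sym2 V → ℝ)
    (hT : T.IsAcyclic) (hw : weightsOK T w) (hle : T' ≤ T)
    {C : Set V} (hC : (T.induce C).Connected) (r : V) :
    phiT T' w (C ∩ {x | T'.Reachable r x}) ≤ phiT T w C := by
  set V1 : Set V := {x | T'.Reachable r x} with hV1
  have hV1adj : ∀ x y, x ∈ V1 → T'.Adj x y → y ∈ V1 :=
    fun x y hx h => hx.trans h.reachable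
  have hout : outEdges T' (C ∩ V1) ⊆ outEdges T C := by
    rintro e ⟨he, a, b, rfl, ha, hb⟩
    have hadj : T'.Adj a b := (T'.mem_edgeSet).1 he
    refine ⟨SimpleGraph.edgeSet_mono hle he, a, b, rfl, ha.1, fun hbC => hb ⟨hbC, ?_⟩⟩
    exact hV1adj a b ha.2 hadj
  have hin : inEdges T' (C ∩ V1) ⊆ inEdges T C := by
    rintro e ⟨he, hx⟩
    exact ⟨SimpleGraph.edgeSet_mono hle he, fun x hxe => (hx x hxe).1⟩
  have hmax : maxOut T' w (C ∩ V1) ≤ maxOut T w C := by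
    by_cases hne : (outEdges T' (C ∩ V1)).Nonempty
    · exact csSup_le_csSup (Set.toFinite _).bddAbove (hne.image w) (Set.image_mono (f := w) hout)
    · unfold maxOut
      rw [Set.not_nonempty_iff_eq_empty.1 hne, Set.image_empty, Real.sSup_empty]
      exact maxOut_nonneg hw le_rfl C
  have hmin : minIn T w C ≤ minIn T' w (C ∩ V1) := by
    by_cases hAs : (C ∩ V1).Subsingleton
    · rw [show minIn T' w (C ∩ V1) = 1 from if_pos hAs]
      exact minIn_le_one hw C
    · have hCs : ¬ C.Subsingleton := fun h => hAs (h.anti Set.inter_subset_left)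
      obtain ⟨a, ha, b, hb, hab⟩ := Set.not_subsingleton_iff.1 hAs
      have hne := exists_inEdge T T' hT hle hC ha hb hab
      rw [show minIn T' w (C ∩ V1) = sInf (w '' inEdges T' (C ∩ V1)) from if_neg hAs,
        show minIn T w C = sInf (w '' inEdges T C) from if_neg hCs]
      exact csInf_le_csInf (Set.toFinite _).bddBelow (hne.image w) (Set.image_mono (f := w) hin)
  exact div_le_div₀ (maxOut_nonneg hw le_rfl C) hmax (minIn_pos hw hC) hmin

lemma evalT_le [Fintype V] (T T' : SimpleGraph V) (w : Sym2 V → ℝ)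
    (hT : T.IsAcyclic) (hw : weightsOK T w) (hle : T' ≤ T)
    (𝒞 : Set (Set V)) (h𝒞 : IsPartitionOn T Set.univ 𝒞) (r : V) :
    evalT T' w {A | ∃ C ∈ 𝒞, A = C ∩ {x | T'.Reachable r x} ∧
      (C ∩ {x | T'.Reachable r x}).Nonempty} ≤ evalT T w 𝒞 := by
  have hphi_nonneg : ∀ C ∈ 𝒞, 0 ≤ phiT T w C := by
    intro C hC
    exact div_nonneg (maxOut_nonneg hw le_rfl C)
      (minIn_pos hw (h𝒞.1 C hC).2.2).le
  have heval_nonneg : 0 ≤ evalT T w 𝒞 := by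
    refine Real.sSup_nonneg ?_
    rintro x ⟨C, hC, rfl⟩
    exact hphi_nonneg C hC
  refine Real.sSup_le ?_ heval_nonneg
  rintro x ⟨A, ⟨C, hC𝒞, rfl, hAne⟩, rfl⟩
  calc phiT T' w (C ∩ {x | T'.Reachable r x}) ≤ phiT T w C :=
        phiT_mono T T' w hT hw hle (h𝒞.1 C hC𝒞).2.2 r
    _ ≤ evalT T w 𝒞 :=
        le_csSup ((Set.toFinite 𝒞).image _).bddAbove (Set.mem_image_of_mem _ hC𝒞)

end Aux

/-- removing one edge of a tree induces, on each of the two subtrees,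
a clustering whose evaluation is at most that of the original clustering. -/
theorem statement4 {V : Type*} [Fintype V] (T : SimpleGraph V) (w : Sym2 V → ℝ)
    (hT : T.IsTree) (hw : weightsOK T w) (𝒞 : Set (Set V))
    (h𝒞 : IsPartitionOn T Set.univ 𝒞) (u v : V) (huv : T.Adj u v) :
    let T' := T.deleteEdges {s(u, v)}
    let V1 : Set V := {x | T'.Reachable u x}
    let V2 : Set V := {x | T'.Reachable v x}
    let 𝒜 : Set (Set V) := {A | ∃ C ∈ 𝒞, A = C ∩ V1 ∧ (C ∩ V1).Nonempty}
    let ℬ : Set (Set V) := {B | ∃ C ∈ 𝒞, B = C ∩ V2 ∧ (C ∩ V2).Nonempty}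
    evalT T' w 𝒜 ≤ evalT T w 𝒞 ∧ evalT T' w ℬ ≤ evalT T w 𝒞 := by
  intro T' V1 V2 𝒜 ℬ
  exact ⟨evalT_le T T' w hT.IsAcyclic hw (T.deleteEdges_le _) 𝒞 h𝒞 u,
    evalT_le T T' w hT.IsAcyclic hw (T.deleteEdges_le _) 𝒞 h𝒞 v⟩

end Bal
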